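/- For t ≥ 2, the number of generalized S-Motzkin paths with (t−2)n H steps and n each of U and D steps equals (1/((t−1)n+1)) * binomial(tn, n), the number of t-ary trees with n nodes. -/

import Mathlib

/-- The three step types of a Motzkin path: H = (1,0), U = (1,1), D = (1,-1). -/
inductive Step : Type | H | U | D
deriving DecidableEq, Repr

/-- A t-ary tree: either empty or a node with t ordered t-ary subtrees. -/
inductive TAry (t : ℕ) : Type
  | leaf : TAry t
  | node : (Fin t → TAry t) → TAry t

/-- The number of nodes of a t-ary tree. -/
def TAry.size {t : ℕ} : TAry t → ℕ
  | .leaf => 0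
  | .node f => 1 + ∑ i : Fin t, (f i).size

/-- A generalized S-Motzkin path: (t-2)n H steps, n U steps and n D steps, forming a
Motzkin path whose first t-2 steps are H, with exactly t-2 H steps between any two
consecutive U steps, and whose k-th D step occurs only after at least k(t-2) H steps
and k U steps. -/
def GenSMotzkin (t n : ℕ) (w : List Step) : Prop :=
  w.count Step.H = (t - 2) * n ∧ w.count Step.U = n ∧ w.count Step.D = n ∧
  (∀ p : List Step, p <+: w → p.count Step.D ≤ p.count Step.U) ∧
  (w ≠ [] → w.take (t - 2) = List.replicate (t - 2) Step.H) ∧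
  (∀ p mid s : List Step, w = p ++ Step.U :: mid ++ Step.U :: s →
    Step.U ∉ mid → mid.count Step.H = t - 2) ∧
  (∀ p s : List Step, w = p ++ Step.D :: s →
    (p.count Step.D + 1) * (t - 2) ≤ p.count Step.H ∧
      p.count Step.D + 1 ≤ p.count Step.U)

namespace SMotz



/-- weight of a boolean word: true ↦ +m, false ↦ -1 -/
def wt (m : ℕ) (l : List Bool) : ℤ := m * l.count true - l.count false

@[simp] lemma wt_nil (m : ℕ) : wt m [] = 0 := by simp [wt]

lemma wt_cons (m : ℕ) (x : Bool) (l : List Bool) :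
    wt m (x :: l) = (if x then (m : ℤ) else -1) + wt m l := by
  cases x <;> simp [wt, List.count_cons] <;> ring

/-- The finset of boolean words of length N with n trues. -/
def wordsF : ℕ → ℕ → Finset (List Bool)
  | 0, 0 => {[]}
  | 0, _+1 => ∅
  | N+1, 0 => (wordsF N 0).image (false :: ·)
  | N+1, n+1 => (wordsF N (n+1)).image (false :: ·) ∪ (wordsF N n).image (true :: ·)

lemma mem_wordsF : ∀ N n (w : List Bool), w ∈ wordsF N n ↔ w.length = N ∧ w.count true = n := by
  intro N
  induction N with
  | zero =>
    intro n w
    cases n with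
    | zero =>
      constructor
      · intro h; simp [wordsF] at h; subst h; simp
      · intro ⟨h1, h2⟩; rw [List.length_eq_zero_iff] at h1; subst h1; simp [wordsF]
    | succ n =>
      simp only [wordsF, Finset.notMem_empty, false_iff, not_and]
      intro h1; rw [List.length_eq_zero_iff] at h1; subst h1; simp
  | succ N ih =>
    intro n w
    cases n with
    | zero =>
      simp only [wordsF, Finset.mem_image]
      constructor
      · rintro ⟨a, ha, rfl⟩
        obtain ⟨h1, h2⟩ := (ih 0 a).1 ha
        simp [List.count_cons, h1, h2]
      · rintro ⟨h1, h2⟩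
        cases w with
        | nil => simp at h1
        | cons x xs =>
          cases x
          · exact ⟨xs, (ih 0 xs).2 ⟨by simpa using h1, by simpa [List.count_cons] using h2⟩, rfl⟩
          · simp [List.count_cons] at h2
    | succ n =>
      simp only [wordsF, Finset.mem_union, Finset.mem_image]
      constructor
      · rintro (⟨a, ha, rfl⟩ | ⟨a, ha, rfl⟩)
        · obtain ⟨h1, h2⟩ := (ih (n+1) a).1 ha
          simp [List.count_cons, h1, h2]
        · obtain ⟨h1, h2⟩ := (ih n a).1 ha
          simp [List.count_cons, h1, h2]
      · rintro ⟨h1, h2⟩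
        cases w with
        | nil => simp at h1
        | cons x xs =>
          cases x
          · exact Or.inl ⟨xs, (ih (n+1) xs).2 ⟨by simpa using h1,
              by simpa [List.count_cons] using h2⟩, rfl⟩
          · exact Or.inr ⟨xs, (ih n xs).2 ⟨by simpa using h1,
              by simp [List.count_cons] at h2; omega⟩, rfl⟩

lemma card_wordsF : ∀ N n, (wordsF N n).card = N.choose n := by
  intro N
  induction N with
  | zero => intro n; cases n <;> simp [wordsF]
  | succ N ih =>
    intro n
    cases n with
    | zero =>
      rw [wordsF, Finset.card_image_of_injective _ (by intro a b h; simpa using h)]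
      simp [ih 0]
    | succ n =>
      rw [wordsF, Finset.card_union_of_disjoint, Finset.card_image_of_injective _
          (by intro a b h; simpa using h), Finset.card_image_of_injective _
          (by intro a b h; simpa using h), ih, ih, Nat.choose_succ_succ']
      · omega
      · rw [Finset.disjoint_left]
        rintro x hx hy
        simp only [Finset.mem_image] at hx hy
        obtain ⟨a, _, rfl⟩ := hx
        obtain ⟨b, _, h⟩ := hy
        exact Bool.noConfusion (List.head_eq_of_cons_eq h)

lemma card_words (N n : ℕ) :
    Nat.card {w : List Bool // w.length = N ∧ w.count true = n} = N.choose n := by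
  rw [Nat.card_congr (Equiv.subtypeEquivRight (fun w => (mem_wordsF N n w).symm)),
    Nat.card_eq_fintype_card, Fintype.card_coe, card_wordsF]



lemma wt_append (m : ℕ) (a b : List Bool) : wt m (a ++ b) = wt m a + wt m b := by
  simp [wt, List.count_append]; ring

lemma length_eq_counts (l : List Bool) : l.length = l.count true + l.count false := by
  induction l with
  | nil => simp
  | cons x xs ih =>
    cases x <;> simp only [List.count_cons, List.length_cons, beq_iff_eq] <;> simp <;> omega

/-- Łukasiewicz-dominated words: length (m+1)n+1, n trues, all proper prefixes nonneg. -/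
def Dom (m n : ℕ) (a : List Bool) : Prop :=
  a.length = (m+1)*n+1 ∧ a.count true = n ∧
    ∀ j < (m+1)*n+1, 0 ≤ wt m (a.take j)

lemma count_false_of {m n} {a : List Bool} (h1 : a.length = (m+1)*n+1)
    (h2 : a.count true = n) : a.count false = m*n+1 := by
  have h3 := length_eq_counts a
  have h4 : (m+1)*n = m*n+n := by ring
  omega

lemma wt_total {m n : ℕ} {a : List Bool} (h1 : a.length = (m+1)*n+1)
    (h2 : a.count true = n) : wt m a = -1 := by
  have hf := count_false_of h1 h2
  unfold wt; rw [h2, hf]; push_cast; ring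

lemma wt_drop (m : ℕ) (l : List Bool) (k : ℕ) :
    wt m (l.drop k) = wt m l - wt m (l.take k) := by
  have := wt_append m (l.take k) (l.drop k)
  rw [List.take_append_drop] at this; linarith

lemma rot_take_le {m : ℕ} {w : List Bool} {k j : ℕ} (hk : k ≤ w.length)
    (hj : j ≤ w.length - k) :
    wt m ((w.rotate k).take j) = wt m (w.take (k + j)) - wt m (w.take k) := by
  rw [List.rotate_eq_drop_append_take hk, List.take_append]
  have h0 : j - (w.drop k).length = 0 := by simp only [List.length_drop]; omega
  rw [h0, List.take_zero, List.append_nil, List.take_drop]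
  rw [wt_drop]
  have : (w.take (k+j)).take k = w.take k := by
    rw [List.take_take]; congr 1; omega
  rw [this]

lemma rot_take_gt {m : ℕ} {w : List Bool} {k j : ℕ} (hk : k ≤ w.length)
    (hj1 : w.length - k < j) (hj2 : j ≤ w.length) :
    wt m ((w.rotate k).take j) =
      wt m w - wt m (w.take k) + wt m (w.take (k + j - w.length)) := by
  rw [List.rotate_eq_drop_append_take hk, List.take_append]
  have h1 : (w.drop k).take j = w.drop k := by
    apply List.take_of_length_le; simp only [List.length_drop]; omega
  have h2 : (w.take k).take (j - (w.drop k).length) = w.take (k + j - w.length) := by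
    rw [List.take_take]; congr 1; simp only [List.length_drop]; omega
  rw [h1, h2, wt_append, wt_drop]

lemma good_iff {m : ℕ} {w : List Bool} (hwt : wt m w = -1) {k : ℕ} (hk : k < w.length) :
    (∀ j < w.length, 0 ≤ wt m ((w.rotate k).take j)) ↔
      ((∀ i < w.length, k ≤ i → wt m (w.take k) ≤ wt m (w.take i)) ∧
       (∀ i < k, wt m (w.take k) < wt m (w.take i))) := by
  have hNt : w.take w.length = w := List.take_length
  have h00 : wt m (w.take 0) = 0 := by simp [wt]
  constructor
  · intro h
    constructor
    · intro i hi hki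
      have hj : i - k ≤ w.length - k := by omega
      have h3 := h (i - k) (by omega)
      rw [rot_take_le (le_of_lt hk) hj, show k + (i - k) = i by omega] at h3
      linarith
    · intro i hik
      rcases Nat.eq_zero_or_pos i with rfl | hi
      · have h3 := h (w.length - k) (by omega)
        rw [rot_take_le (le_of_lt hk) (le_refl _),
          show k + (w.length - k) = w.length by omega, hNt, hwt] at h3
        rw [h00]; linarith
      · have h3 := h (w.length - k + i) (by omega)
        rw [rot_take_gt (le_of_lt hk) (by omega) (by omega),
          show k + (w.length - k + i) - w.length = i by omega, hwt] at h3
        linarith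
  · intro ⟨h1, h2⟩ j hj
    rcases le_or_gt j (w.length - k) with hle | hgt
    · rw [rot_take_le (le_of_lt hk) hle]
      rcases lt_or_ge (k + j) w.length with hlt | hge
      · have := h1 (k + j) hlt (by omega); linarith
      · have hkj : k + j = w.length := by omega
        have hk0 : 0 < k := by omega
        have h3 := h2 0 hk0
        rw [h00] at h3
        rw [hkj, hNt, hwt]; linarith
    · rw [rot_take_gt (le_of_lt hk) hgt (le_of_lt hj), hwt]
      have h3 := h2 _ (show k + j - w.length < k by omega)
      linarith

lemma exists_unique_good {m : ℕ} {w : List Bool} (hwt : wt m w = -1) (hN : 0 < w.length) :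
    ∃! k, k < w.length ∧ ∀ j < w.length, 0 ≤ wt m ((w.rotate k).take j) := by
  classical
  have hne : ((Finset.range w.length).image (fun i => wt m (w.take i))).Nonempty :=
    ⟨_, Finset.mem_image.2 ⟨0, Finset.mem_range.2 hN, rfl⟩⟩
  set μ := ((Finset.range w.length).image (fun i => wt m (w.take i))).min' hne with hμdef
  have hex : ∃ k, k < w.length ∧ wt m (w.take k) = μ := by
    have h3 := Finset.min'_mem _ hne
    rw [← hμdef] at h3
    simp only [Finset.mem_image, Finset.mem_range] at h3
    obtain ⟨k, hk, hSk⟩ := h3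
    exact ⟨k, hk, hSk⟩
  have hmin : ∀ i < w.length, μ ≤ wt m (w.take i) := by
    intro i hi
    apply Finset.min'_le
    simp only [Finset.mem_image, Finset.mem_range]
    exact ⟨i, hi, rfl⟩
  obtain ⟨hk0lt, hk0val⟩ := Nat.find_spec hex
  have hgood : ∀ j < w.length, 0 ≤ wt m ((w.rotate (Nat.find hex)).take j) := by
    rw [good_iff hwt hk0lt]
    constructor
    · intro i hi _; rw [hk0val]; exact hmin i hi
    · intro i hik
      have hilt : i < w.length := lt_trans hik hk0lt
      have hne2 : wt m (w.take i) ≠ μ :=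
        fun h => Nat.find_min hex hik ⟨hilt, h⟩
      have h3 := hmin i hilt
      rw [hk0val]
      rcases lt_or_eq_of_le h3 with h4 | h4
      · exact h4
      · exact absurd h4.symm hne2
  refine ⟨Nat.find hex, ⟨hk0lt, hgood⟩, ?_⟩
  rintro k ⟨hklt, hkgood⟩
  by_contra hne'
  rw [good_iff hwt hklt] at hkgood
  rw [good_iff hwt hk0lt] at hgood
  rcases lt_or_gt_of_ne hne' with h | h
  · -- k < Nat.find hex
    have h1 := hgood.2 k h
    have h2 := hkgood.1 _ hk0lt (le_of_lt h)
    linarith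
  · have h1 := hkgood.2 _ h
    have h2 := hgood.1 k hklt (le_of_lt h)
    linarith


noncomputable def goodIdx (m : ℕ) (w : List Bool) : ℕ :=
  if h : wt m w = -1 ∧ 0 < w.length then (exists_unique_good (m := m) h.1 h.2).exists.choose
  else 0

lemma goodIdx_spec {m : ℕ} {w : List Bool} (h1 : wt m w = -1) (h2 : 0 < w.length) :
    goodIdx m w < w.length ∧ ∀ j < w.length, 0 ≤ wt m ((w.rotate (goodIdx m w)).take j) := by
  rw [goodIdx, dif_pos (⟨h1, h2⟩ : wt m w = -1 ∧ 0 < w.length)]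
  exact (exists_unique_good h1 h2).exists.choose_spec

lemma goodIdx_unique {m : ℕ} {w : List Bool} (h1 : wt m w = -1) (h2 : 0 < w.length) {k : ℕ}
    (hk : k < w.length ∧ ∀ j < w.length, 0 ≤ wt m ((w.rotate k).take j)) :
    k = goodIdx m w :=
  (exists_unique_good h1 h2).unique hk (goodIdx_spec h1 h2)

noncomputable def cycleEquiv (m n : ℕ) :
    {w : List Bool // w.length = (m+1)*n+1 ∧ w.count true = n} ≃
      {a : List Bool // Dom m n a} × Fin ((m+1)*n+1) where
  toFun w :=
    (⟨w.1.rotate (goodIdx m w.1), by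
      have hwt : wt m w.1 = -1 := wt_total w.2.1 w.2.2
      have hN : 0 < w.1.length := by rw [w.2.1]; omega
      obtain ⟨hlt, hg⟩ := goodIdx_spec hwt hN
      refine ⟨by rw [List.length_rotate, w.2.1], by rw [(List.rotate_perm _ _).count_eq, w.2.2], ?_⟩
      intro j hj
      exact hg j (by rw [w.2.1]; exact hj)⟩,
     ⟨goodIdx m w.1, by
      have hwt : wt m w.1 = -1 := wt_total w.2.1 w.2.2
      have hN : 0 < w.1.length := by rw [w.2.1]; omega
      have := (goodIdx_spec hwt hN).1
      rw [w.2.1] at this; exact this⟩)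
  invFun p :=
    ⟨p.1.1.rotate ((m+1)*n+1 - p.2.1), by
      constructor
      · rw [List.length_rotate, p.1.2.1]
      · rw [(List.rotate_perm _ _).count_eq, p.1.2.2.1]⟩
  left_inv w := by
    apply Subtype.ext
    have hwt : wt m w.1 = -1 := wt_total w.2.1 w.2.2
    have hN : 0 < w.1.length := by rw [w.2.1]; omega
    have hlt := (goodIdx_spec hwt hN).1
    simp only [List.rotate_rotate]
    have hrot : w.1.rotate ((m+1)*n+1) = w.1 := by
      have h5 := List.rotate_length w.1
      rw [w.2.1] at h5; exact h5
    rw [show goodIdx m w.1 + ((m+1)*n+1 - goodIdx m w.1) = (m+1)*n+1 by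
      rw [w.2.1] at hlt; omega, hrot]
  right_inv p := by
    obtain ⟨⟨a, ha⟩, k⟩ := p
    have hlen : (a.rotate ((m+1)*n+1 - k.1)).length = (m+1)*n+1 := by
      rw [List.length_rotate, ha.1]
    have hwt : wt m (a.rotate ((m+1)*n+1 - k.1)) = -1 :=
      wt_total hlen (by rw [(List.rotate_perm _ _).count_eq, ha.2.1])
    have hN : 0 < (a.rotate ((m+1)*n+1 - k.1)).length := by rw [hlen]; omega
    have hback : (a.rotate ((m+1)*n+1 - k.1)).rotate k.1 = a := by
      have h5 := List.rotate_length a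
      rw [ha.1] at h5
      rw [List.rotate_rotate, show (m+1)*n+1 - k.1 + k.1 = (m+1)*n+1 by
        have := k.2; omega, h5]
    have hgood : k.1 < (a.rotate ((m+1)*n+1 - k.1)).length ∧
        ∀ j < (a.rotate ((m+1)*n+1 - k.1)).length,
          0 ≤ wt m (((a.rotate ((m+1)*n+1 - k.1)).rotate k.1).take j) := by
      constructor
      · rw [hlen]; exact k.2
      · intro j hj
        rw [hback]
        exact ha.2.2 j (by rw [hlen] at hj; exact hj)
    have hk := (goodIdx_unique hwt hN hgood).symm
    refine Prod.ext ?_ ?_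
    · apply Subtype.ext
      simp only
      rw [hk, hback]
    · simp only
      exact Fin.ext (by simp only; rw [hk])

theorem card_dom_mul (m n : ℕ) :
    Nat.card {a : List Bool // Dom m n a} * ((m+1)*n+1) = ((m+1)*n+1).choose n := by
  have h := card_words ((m+1)*n+1) n
  rw [Nat.card_congr (cycleEquiv m n), Nat.card_prod,
    show Nat.card (Fin ((m+1)*n+1)) = (m+1)*n+1 by simp [Nat.card_eq_fintype_card]] at h
  exact h

theorem card_dom (m n : ℕ) :
    Nat.card {a : List Bool // Dom m n a} * (m*n+1) = ((m+1)*n).choose n := by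
  have h1 := card_dom_mul m n
  have h2 := Nat.choose_mul_succ_eq ((m+1)*n) n
  have h3 : (m+1)*n+1-n = m*n+1 := by
    have : (m+1)*n = m*n+n := by ring
    omega
  apply Nat.eq_of_mul_eq_mul_right (show 0 < (m+1)*n+1 by omega)
  rw [h2, h3, ← h1]; ring
-- ### codes of trees

def code {t : ℕ} : TAry t → List Bool
  | .leaf => [false]
  | .node f => true :: (List.ofFn fun i => code (f i)).flatten

lemma length_code {t : ℕ} (T : TAry t) : (code T).length = t * T.size + 1 := by
  induction T with
  | leaf => simp [code, TAry.size]
  | node f ih =>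
    simp only [code, TAry.size, List.length_cons, List.length_flatten, List.map_ofFn,
      List.sum_ofFn, Function.comp]
    rw [Finset.sum_congr rfl (fun i _ => ih i)]
    rw [Finset.sum_add_distrib]
    simp [Finset.sum_const, Finset.mul_sum, mul_add, mul_one]
    ring

lemma count_true_code {t : ℕ} (T : TAry t) : (code T).count true = T.size := by
  induction T with
  | leaf => simp [code, TAry.size]
  | node f ih =>
    simp only [code, TAry.size, List.count_cons, List.count_flatten, List.map_ofFn,
      List.sum_ofFn, Function.comp]
    rw [Finset.sum_congr rfl (fun i _ => ih i)]
    simp [add_comm]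

lemma wt_code {m : ℕ} (T : TAry (m+1)) : wt m (code T) = -1 := by
  have h1 := length_code T
  have h2 := count_true_code T
  have h3 := length_eq_counts (code T)
  have h4 : (m+1)*T.size = m*T.size + T.size := by ring
  have h5 : (code T).count false = m * T.size + 1 := by omega
  unfold wt; rw [h2, h5]; push_cast; ring

lemma code_ne_nil {t : ℕ} (T : TAry t) : code T ≠ [] := by
  cases T <;> simp [code]

lemma prefix_append_cases {α : Type*} {p a b : List α} (h : p <+: a ++ b) :
    p <+: a ∨ ∃ q, q <+: b ∧ p = a ++ q := by
  rcases le_or_gt p.length a.length with hle | hgt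
  · exact Or.inl (List.prefix_of_prefix_length_le h (List.prefix_append a b) hle)
  · right
    have hp := List.prefix_iff_eq_take.1 h
    refine ⟨b.take (p.length - a.length), List.take_prefix _ _, ?_⟩
    conv_lhs => rw [hp]
    rw [List.take_append, List.take_of_length_le (by omega)]

lemma wt_flatten_prefix (m : ℕ) : ∀ L : List (List Bool),
    (∀ c ∈ L, wt m c = -1 ∧ ∀ p, p <+: c → p ≠ c → 0 ≤ wt m p) →
    ∀ p, p <+: L.flatten →
      (-(L.length : ℤ) ≤ wt m p ∧ (p ≠ L.flatten → -(L.length : ℤ) < wt m p)) := by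
  intro L
  induction L with
  | nil =>
    intro _ p hp
    rw [List.flatten_nil] at hp
    rw [List.prefix_nil.1 hp]
    simp [wt]
  | cons c L' ih =>
    intro hL p hp
    have hc := hL c (List.mem_cons_self)
    rw [List.flatten_cons] at hp
    rcases prefix_append_cases hp with hpc | ⟨q, hq, rfl⟩
    · rcases eq_or_ne p c with rfl | hne
      · refine ⟨by rw [hc.1]; simp only [List.length_cons]; push_cast; omega, ?_⟩
        intro hne2
        rw [List.flatten_cons] at hne2
        have hL' : L' ≠ [] := by
          rintro rfl
          simp at hne2
        have : 0 < L'.length := List.length_pos_iff.2 hL'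
        rw [hc.1]
        simp only [List.length_cons]
        push_cast
        omega
      · have := hc.2 p hpc hne
        refine ⟨by simp only [List.length_cons]; push_cast; linarith,
          fun _ => by simp only [List.length_cons]; push_cast; linarith⟩
    · obtain ⟨h1, h2⟩ := ih (fun c' hc' => hL c' (List.mem_cons_of_mem _ hc')) q hq
      rw [wt_append, hc.1]
      constructor
      · simp only [List.length_cons]; push_cast; linarith
      · intro hne
        rw [List.flatten_cons] at hne
        have : q ≠ L'.flatten := fun h => hne (by rw [h])
        have := h2 this
        simp only [List.length_cons]; push_cast; linarith

lemma code_prefix_nonneg {m : ℕ} (T : TAry (m+1)) :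
    ∀ p, p <+: code T → p ≠ code T → 0 ≤ wt m p := by
  induction T with
  | leaf =>
    intro p hp hne
    rw [code] at hp hne
    cases p with
    | nil => simp [wt]
    | cons x q =>
      rw [List.cons_prefix_cons] at hp
      obtain ⟨rfl, hq⟩ := hp
      rw [List.prefix_nil] at hq
      subst hq
      exact absurd rfl hne
  | node f ih =>
    intro p hp hne
    rw [code] at hp hne
    cases p with
    | nil => simp [wt]
    | cons x q =>
      rw [List.cons_prefix_cons] at hp
      obtain ⟨rfl, hq⟩ := hp
      have hblocks : ∀ c ∈ (List.ofFn fun i => code (f i)), wt m c = -1 ∧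
          ∀ p', p' <+: c → p' ≠ c → 0 ≤ wt m p' := by
        intro c hcmem
        rw [List.mem_ofFn] at hcmem
        obtain ⟨i, rfl⟩ := hcmem
        exact ⟨wt_code (f i), ih i⟩
      obtain ⟨h1, h2⟩ := wt_flatten_prefix m _ hblocks q hq
      have hqne : q ≠ (List.ofFn fun i => code (f i)).flatten := by
        intro h; exact hne (by rw [h])
      have h3 := h2 hqne
      have hlen : ((List.ofFn fun i => code (f i)) : List (List Bool)).length = m + 1 := by
        simp
      rw [hlen] at h3
      have hwtq : wt m (true :: q) = m + wt m q := by
        have := wt_append m [true] q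
        simp only [List.singleton_append] at this
        rw [this]
        congr 1
        simp [wt]
      rw [hwtq]
      push_cast at h3 ⊢
      omega

-- ### parsing

lemma parse_blocks (m : ℕ) : ∀ (j : ℕ) (a : List Bool),
    wt m a = -(j : ℤ) →
    (∀ p, p <+: a → p ≠ a → -(j : ℤ) < wt m p) →
    ∃ L : List (List Bool), L.length = j ∧ L.flatten = a ∧
      ∀ c ∈ L, wt m c = -1 ∧ ∀ p, p <+: c → p ≠ c → 0 ≤ wt m p := by
  intro j
  induction j with
  | zero =>
    intro a ha hp
    have hanil : a = [] := by
      by_contra hne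
      have := hp [] List.nil_prefix (Ne.symm hne)
      simp [wt] at this
    exact ⟨[], rfl, by simp [hanil], by simp⟩
  | succ j ih =>
    intro a ha hp
    classical
    have hQ : ∃ i, wt m (a.take i) ≤ -1 := by
      refine ⟨a.length, ?_⟩
      rw [List.take_length, ha]
      push_cast; omega
    set i0 := Nat.find hQ with hi0def
    have hi0 : wt m (a.take i0) ≤ -1 := Nat.find_spec hQ
    have hmin : ∀ i' < i0, ¬ (wt m (a.take i') ≤ -1) := fun i' h => Nat.find_min hQ h
    have hi0pos : 0 < i0 := by
      rcases Nat.eq_zero_or_pos i0 with h | h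
      · rw [h] at hi0; simp [wt] at hi0
      · exact h
    have hi0le : i0 ≤ a.length := by
      apply Nat.find_le
      rw [List.take_length, ha]
      push_cast; omega
    have hstep : wt m (a.take i0) = -1 := by
      have h1 : ¬ (wt m (a.take (i0-1)) ≤ -1) := hmin _ (by omega)
      have h3 : i0-1 < a.length := by omega
      have h2 : a.take i0 = a.take (i0-1) ++ [a[i0-1]] := by
        conv_lhs => rw [show i0 = (i0-1)+1 by omega]
        rw [List.take_succ, List.getElem?_eq_getElem h3]
        rfl
      have h5 := wt_append m (a.take (i0-1)) [a[i0-1]]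
      rw [← h2] at h5
      have h6 : (-1 : ℤ) ≤ wt m [a[i0-1]] := by
        rcases Bool.eq_false_or_eq_true a[i0-1] with hb | hb <;> rw [hb] <;>
          simp [wt] <;> omega
      push_neg at h1
      omega
    have hclen : (a.take i0).length = i0 := by
      rw [List.length_take]; omega
    have hcprop : ∀ p, p <+: a.take i0 → p ≠ a.take i0 → 0 ≤ wt m p := by
      intro p hpc hpne
      have hplen : p.length < i0 := by
        have hle := hpc.length_le
        rw [hclen] at hle
        rcases eq_or_lt_of_le hle with h | h
        · exact absurd (hpc.eq_of_length (by rw [hclen, h])) hpne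
        · exact h
      have hpa : p <+: a := hpc.trans (List.take_prefix _ _)
      have h9 := hmin p.length hplen
      push_neg at h9
      rw [← List.prefix_iff_eq_take.1 hpa] at h9
      omega
    have hr : wt m (a.drop i0) = -(j : ℤ) := by
      rw [wt_drop, ha, hstep]
      push_cast; ring
    have hrprop : ∀ p, p <+: a.drop i0 → p ≠ a.drop i0 → -(j:ℤ) < wt m p := by
      intro p hpr hpne
      have h7 : a.take i0 ++ p = a.take (i0 + p.length) := by
        rw [List.take_add]
        congr 1
        exact List.prefix_iff_eq_take.1 hpr
      have h8 : a.take i0 ++ p ≠ a := by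
        intro h
        apply hpne
        have hlen1 : i0 + p.length = a.length := by
          have := congrArg List.length h
          rw [List.length_append, hclen] at this
          omega
        have hlen2 : p.length = (a.drop i0).length := by
          rw [List.length_drop]; omega
        exact hpr.eq_of_length hlen2
      have h10 := hp (a.take i0 ++ p) (h7 ▸ List.take_prefix _ _) h8
      rw [wt_append, hstep] at h10
      push_cast at h10 ⊢
      linarith
    obtain ⟨L, hL1, hL2, hL3⟩ := ih (a.drop i0) hr hrprop
    refine ⟨a.take i0 :: L, by simp [hL1], by simp [hL2], ?_⟩
    intro c' hc'
    rcases List.mem_cons.1 hc' with rfl | hc'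
    · exact ⟨hstep, hcprop⟩
    · exact hL3 c' hc'

lemma parse (m : ℕ) : ∀ (len : ℕ) (a : List Bool), a.length ≤ len →
    wt m a = -1 → (∀ p, p <+: a → p ≠ a → 0 ≤ wt m p) →
    ∃ T : TAry (m+1), code T = a := by
  intro len
  induction len with
  | zero =>
    intro a hlen ha _
    have hnil : a = [] := List.length_eq_zero_iff.1 (by omega)
    rw [hnil] at ha
    simp [wt] at ha
  | succ len ih =>
    intro a hlen ha hp
    cases a with
    | nil => simp [wt] at ha
    | cons x q =>
      cases x
      · -- false head: a = [false]
        have hq0 : wt m q = 0 := by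
          have := wt_append m [false] q
          simp only [List.singleton_append] at this
          rw [this] at ha
          have hwf : wt m [false] = -1 := by simp [wt]
          rw [hwf] at ha; linarith
        have hqnil : q = [] := by
          by_contra hne
          have h1 : ([false] : List Bool) <+: false :: q := ⟨q, rfl⟩
          have h2 : ([false] : List Bool) ≠ false :: q := by
            intro h; injection h with _ h'; exact hne h'.symm
          have := hp [false] h1 h2
          simp [wt] at this
        exact ⟨.leaf, by simp [code, hqnil]⟩
      · -- true head
        have hq : wt m q = -((m:ℤ)+1) := by
          have := wt_append m [true] q
          simp only [List.singleton_append] at this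
          rw [this] at ha
          have hwt1 : wt m [true] = m := by simp [wt]
          rw [hwt1] at ha; linarith
        have hqp : ∀ p, p <+: q → p ≠ q → -((m:ℤ)+1) < wt m p := by
          intro p hpq hpne
          have h1 : (true :: p) <+: true :: q := List.cons_prefix_cons.2 ⟨rfl, hpq⟩
          have h2 : (true :: p) ≠ true :: q := by
            intro h; injection h with _ h'; exact hpne h'
          have h3 := hp _ h1 h2
          have h4 := wt_append m [true] p
          simp only [List.singleton_append] at h4
          rw [h4] at h3
          have hwt1 : wt m [true] = m := by simp [wt]
          rw [hwt1] at h3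
          linarith
        obtain ⟨L, hL1, hL2, hL3⟩ := parse_blocks m (m+1) q
          (by rw [hq]; push_cast; ring) (by intro p h1 h2; have := hqp p h1 h2; push_cast; linarith)
        have hblen : ∀ c ∈ L, c.length ≤ len := by
          intro c hc
          have h1 := (List.sublist_flatten_of_mem hc).length_le
          rw [hL2] at h1
          simp only [List.length_cons] at hlen
          omega
        have hchoice : ∀ i : Fin (m+1), ∃ T : TAry (m+1), code T = L.get ⟨i.1, by rw [hL1]; exact i.2⟩ := by
          intro i
          have hmem : L.get ⟨i.1, by rw [hL1]; exact i.2⟩ ∈ L := L.get_mem _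
          obtain ⟨hc1, hc2⟩ := hL3 _ hmem
          exact ih _ (hblen _ hmem) hc1 hc2
        classical
        refine ⟨.node (fun i => (hchoice i).choose), ?_⟩
        rw [code]
        congr 1
        have hofn : (List.ofFn fun i => code ((hchoice i).choose)) = L := by
          apply List.ext_get
          · simp [hL1]
          · intro k h1 h2
            rw [List.get_ofFn]
            have hk : k < m + 1 := hL1 ▸ h2
            exact (hchoice ⟨k, hk⟩).choose_spec
        rw [hofn, hL2]

-- ### injectivity of code

lemma block_eq_of_append {m : ℕ} {c1 c2 r1 r2 : List Bool}
    (h : c1 ++ r1 = c2 ++ r2)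
    (h1 : wt m c1 = -1) (h1p : ∀ p, p <+: c1 → p ≠ c1 → 0 ≤ wt m p)
    (h2 : wt m c2 = -1) (h2p : ∀ p, p <+: c2 → p ≠ c2 → 0 ≤ wt m p) :
    c1 = c2 := by
  have key : ∀ {d1 d2 e1 e2 : List Bool}, d1 ++ e1 = d2 ++ e2 →
      wt m d1 = -1 → (∀ p, p <+: d2 → p ≠ d2 → 0 ≤ wt m p) →
      d1.length ≤ d2.length → d1 = d2 := by
    intro d1 d2 e1 e2 hh hw hpp hl
    have hpre1 : d1 <+: d2 ++ e2 := hh ▸ List.prefix_append d1 e1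
    have hpre : d1 <+: d2 := List.prefix_of_prefix_length_le hpre1 (List.prefix_append d2 e2) hl
    by_contra hne
    have := hpp d1 hpre hne
    omega
  rcases le_total c1.length c2.length with hle | hle
  · exact key h h1 h2p hle
  · exact (key h.symm h2 h1p hle).symm

lemma flatten_inj (m : ℕ) : ∀ (L1 L2 : List (List Bool)),
    (∀ c ∈ L1, wt m c = -1 ∧ ∀ p, p <+: c → p ≠ c → 0 ≤ wt m p) →
    (∀ c ∈ L2, wt m c = -1 ∧ ∀ p, p <+: c → p ≠ c → 0 ≤ wt m p) →
    L1.length = L2.length → L1.flatten = L2.flatten → L1 = L2 := by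
  intro L1
  induction L1 with
  | nil =>
    intro L2 _ _ hlen _
    cases L2 with
    | nil => rfl
    | cons c L2' => simp at hlen
  | cons c1 L1' ih =>
    intro L2 hP1 hP2 hlen hfl
    cases L2 with
    | nil => simp at hlen
    | cons c2 L2' =>
      rw [List.flatten_cons, List.flatten_cons] at hfl
      obtain ⟨hw1, hp1⟩ := hP1 c1 (List.mem_cons_self)
      obtain ⟨hw2, hp2⟩ := hP2 c2 (List.mem_cons_self)
      have hc : c1 = c2 := block_eq_of_append hfl hw1 hp1 hw2 hp2
      subst hc
      have hrest : L1'.flatten = L2'.flatten := by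
        exact List.append_cancel_left hfl
      rw [ih L2' (fun c hc => hP1 c (List.mem_cons_of_mem _ hc))
        (fun c hc => hP2 c (List.mem_cons_of_mem _ hc)) (by simpa using hlen) hrest]

lemma code_inj {m : ℕ} : ∀ (T1 T2 : TAry (m+1)), code T1 = code T2 → T1 = T2 := by
  intro T1
  induction T1 with
  | leaf =>
    intro T2 h
    cases T2 with
    | leaf => rfl
    | node g => rw [code, code] at h; injection h with h1 _; exact Bool.noConfusion h1
  | node f ih =>
    intro T2 h
    cases T2 with
    | leaf => rw [code, code] at h; injection h with h1 _; exact Bool.noConfusion h1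
    | node g =>
      rw [code, code] at h
      injection h with _ h2
      have hP : ∀ (F : Fin (m+1) → TAry (m+1)),
          ∀ c ∈ (List.ofFn fun i => code (F i)), wt m c = -1 ∧
            ∀ p, p <+: c → p ≠ c → 0 ≤ wt m p := by
        intro F c hc
        rw [List.mem_ofFn] at hc
        obtain ⟨i, rfl⟩ := hc
        exact ⟨wt_code (F i), code_prefix_nonneg (F i)⟩
      have := flatten_inj m _ _ (hP f) (hP g) (by simp) h2
      rw [List.ofFn_inj] at this
      congr 1
      funext i
      exact ih i (g i) (congrFun this i)

-- ### tree count

lemma card_trees (m n : ℕ) :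
    Nat.card {T : TAry (m+1) // T.size = n} = Nat.card {a : List Bool // Dom m n a} := by
  have hmap : ∀ T : {T : TAry (m+1) // T.size = n}, Dom m n (code T.1) := by
    rintro ⟨T, hT⟩
    refine ⟨by rw [length_code, hT], by rw [count_true_code, hT], ?_⟩
    intro j hj
    have hlen : (code T).length = (m+1)*n+1 := by rw [length_code, hT]
    have hpre : (code T).take j <+: code T := List.take_prefix _ _
    have hne : (code T).take j ≠ code T := by
      intro h
      have := congrArg List.length h
      rw [List.length_take, hlen] at this
      omega
    exact code_prefix_nonneg T _ hpre hne
  apply Nat.card_eq_of_bijective (fun T => ⟨code T.1, hmap T⟩)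
  constructor
  · rintro ⟨T1, h1⟩ ⟨T2, h2⟩ h
    have := congrArg Subtype.val h
    simp only at this
    exact Subtype.ext (code_inj T1 T2 this)
  · rintro ⟨a, ha⟩
    have hwt : wt m a = -1 := wt_total ha.1 ha.2.1
    have hprop : ∀ p, p <+: a → p ≠ a → 0 ≤ wt m p := by
      intro p hpa hpne
      have h1 : p = a.take p.length := List.prefix_iff_eq_take.1 hpa
      have h2 : p.length < a.length := by
        rcases eq_or_lt_of_le hpa.length_le with h | h
        · exact absurd (hpa.eq_of_length h) hpne
        · exact h
      rw [h1]
      exact ha.2.2 p.length (by rw [← ha.1]; exact h2)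
    obtain ⟨T, hT⟩ := parse m a.length a le_rfl hwt hprop
    have hsize : T.size = n := by
      have := count_true_code T
      rw [hT, ha.2.1] at this
      exact this.symm
    exact ⟨⟨T, hsize⟩, Subtype.ext hT⟩
-- ### Ballot-type words (masks of generalized S-Motzkin paths)

def Bal (m n : ℕ) (b : List Bool) : Prop :=
  b.length = (m+1)*n ∧ b.count true = n ∧
    ∀ j, m * ((b.take j).count true) ≤ (b.take j).count false

lemma wt_nonpos_iff (m : ℕ) (l : List Bool) :
    wt m l ≤ 0 ↔ m * l.count true ≤ l.count false := by
  unfold wt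
  constructor <;> intro h
  · have : (m * l.count true : ℤ) ≤ l.count false := by linarith
    exact_mod_cast this
  · have : (m * l.count true : ℤ) ≤ l.count false := by exact_mod_cast h
    linarith

lemma bal_wt_zero {m n : ℕ} {b : List Bool} (hb : Bal m n b) : wt m b = 0 := by
  have h3 := length_eq_counts b
  have h5 : (m+1)*n = m*n+n := by ring
  have hf : b.count false = m*n := by
    have := hb.1; have := hb.2.1; omega
  unfold wt; rw [hb.2.1, hf]; push_cast; ring

def balEquivDom (m n : ℕ) : {b : List Bool // Bal m n b} ≃ {a : List Bool // Dom m n a} where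
  toFun b :=
    ⟨b.1.reverse ++ [false], by
      obtain ⟨b, hb⟩ := b
      refine ⟨by simp [hb.1], by simp [hb.2.1], ?_⟩
      intro j hj
      have hjle : j ≤ (m+1)*n := by omega
      have hlenr : b.reverse.length = (m+1)*n := by simp [hb.1]
      rw [List.take_append,
        show j - b.reverse.length = 0 by omega, List.take_zero, List.append_nil]
      rw [List.take_reverse]
      have h1 : wt m (b.reverse) = 0 := by
        have := bal_wt_zero hb
        simp only [wt, List.count_reverse] at *
        exact this
      have h2 : wt m ((List.drop (b.length - j) b).reverse) =
          wt m (List.drop (b.length - j) b) := by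
        simp [wt, List.count_reverse]
      rw [h2, wt_drop]
      have h3 : wt m (List.take (b.length - j) b) ≤ 0 := by
        rw [wt_nonpos_iff]
        exact hb.2.2 _
      have h4 : wt m b = 0 := bal_wt_zero hb
      linarith⟩
  invFun a :=
    ⟨a.1.dropLast.reverse, by
      obtain ⟨a, ha⟩ := a
      have hane : a ≠ [] := by
        intro h
        have h0 := ha.1
        rw [h] at h0
        simp at h0
      have hdl : a.dropLast = a.take (a.length - 1) := a.dropLast_eq_take
      have hwa : wt m a = -1 := wt_total ha.1 ha.2.1
      have hwdl : 0 ≤ wt m a.dropLast := by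
        rw [hdl]
        apply ha.2.2
        rw [ha.1]; omega
      have hlast : a.getLast hane = false := by
        by_contra h
        have hlast' : a.getLast hane = true := by
          rcases Bool.eq_false_or_eq_true (a.getLast hane) with h' | h'
          · exact h'
          · exact absurd h' h
        have hsplit := a.dropLast_append_getLast hane
        have := wt_append m a.dropLast [a.getLast hane]
        rw [hsplit, hlast'] at this
        have hw1 : wt m [true] = m := by simp [wt]
        rw [hwa, hw1] at this
        have : (0:ℤ) ≤ m := by positivity
        omega
      have hsplit := a.dropLast_append_getLast hane
      rw [hlast] at hsplit
      have hcount : a.dropLast.count true = n := by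
        have := congrArg (List.count true) hsplit
        rw [List.count_append] at this
        simp at this
        rw [← ha.2.1]; exact this
      have hwdl0 : wt m a.dropLast = 0 := by
        have := wt_append m a.dropLast [false]
        rw [hsplit, hwa] at this
        have hw0 : wt m [false] = -1 := by simp [wt]
        rw [hw0] at this
        linarith
      refine ⟨by simp [List.length_dropLast, ha.1], by simpa using hcount, ?_⟩
      intro j
      rw [← wt_nonpos_iff, List.take_reverse]
      have h2 : ∀ l : List Bool, wt m l.reverse = wt m l := by
        intro l; simp [wt, List.count_reverse]
      rw [h2, wt_drop, hwdl0]
      have h3 : 0 ≤ wt m (a.dropLast.take (a.dropLast.length - j)) := by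
        rw [hdl, List.take_take]
        apply ha.2.2
        rw [ha.1]
        have : a.length - 1 ≤ (m+1)*n := by rw [ha.1]; omega
        omega
      linarith⟩
  left_inv b := by
    apply Subtype.ext
    simp only [List.dropLast_concat, List.reverse_reverse]
  right_inv a := by
    apply Subtype.ext
    obtain ⟨a, ha⟩ := a
    simp only [List.reverse_reverse]
    have hane : a ≠ [] := by
      intro h
      have h0 := ha.1
      rw [h] at h0
      simp at h0
    have hwa : wt m a = -1 := wt_total ha.1 ha.2.1
    have hwdl : 0 ≤ wt m a.dropLast := by
      rw [a.dropLast_eq_take]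
      apply ha.2.2
      rw [ha.1]; omega
    have hlast : a.getLast hane = false := by
      by_contra h
      have hlast' : a.getLast hane = true := by
        rcases Bool.eq_false_or_eq_true (a.getLast hane) with h' | h'
        · exact h'
        · exact absurd h' h
      have hsplit := a.dropLast_append_getLast hane
      have := wt_append m a.dropLast [a.getLast hane]
      rw [hsplit, hlast'] at this
      have hw1 : wt m [true] = m := by simp [wt]
      rw [hwa, hw1] at this
      have : (0:ℤ) ≤ m := by positivity
      omega
    have hsplit := a.dropLast_append_getLast hane
    rw [hlast] at hsplit
    exact hsplit
-- ## basic step functions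

def isD : Step → Bool
  | Step.D => true
  | _ => false

def mask (w : List Step) : List Bool := w.map isD

def eraseD (w : List Step) : List Step := w.filter (fun s => !(isD s))

def blk (e : ℕ) : List Step := List.replicate e Step.H ++ [Step.U]

def skel (e : ℕ) : ℕ → List Step
  | 0 => []
  | n+1 => blk e ++ skel e n

def merge : List Bool → List Step → List Step
  | [], _ => []
  | true :: bs, σ => Step.D :: merge bs σ
  | false :: _, [] => []
  | false :: bs, x :: σ => x :: merge bs σ

-- ## counting basics

lemma length_step_counts (w : List Step) :
    w.length = w.count Step.H + w.count Step.U + w.count Step.D := by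
  induction w with
  | nil => simp
  | cons x xs ih =>
    cases x <;> simp [List.count_cons] <;> omega

lemma mask_take (w : List Step) (j : ℕ) : (mask w).take j = mask (w.take j) := by
  simp [mask, List.map_take]

lemma mask_append (v w : List Step) : mask (v ++ w) = mask v ++ mask w := by
  simp [mask]

lemma count_true_mask (w : List Step) : (mask w).count true = w.count Step.D := by
  induction w with
  | nil => simp [mask]
  | cons x xs ih =>
    cases x <;> simp [mask, isD, List.count_cons] at * <;> omega

lemma count_false_mask (w : List Step) :
    (mask w).count false = w.count Step.H + w.count Step.U := by
  induction w with
  | nil => simp [mask]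
  | cons x xs ih =>
    cases x <;> simp [mask, isD, List.count_cons] at * <;> omega

lemma length_mask (w : List Step) : (mask w).length = w.length := by simp [mask]

-- ## eraseD basics

lemma eraseD_append (v w : List Step) : eraseD (v ++ w) = eraseD v ++ eraseD w := by
  simp [eraseD, List.filter_append]

lemma eraseD_cons_D (w : List Step) : eraseD (Step.D :: w) = eraseD w := by
  simp [eraseD, isD]

lemma eraseD_cons_H (w : List Step) : eraseD (Step.H :: w) = Step.H :: eraseD w := by
  simp [eraseD, isD]

lemma eraseD_cons_U (w : List Step) : eraseD (Step.U :: w) = Step.U :: eraseD w := by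
  simp [eraseD, isD]

lemma count_eraseD_H (w : List Step) : (eraseD w).count Step.H = w.count Step.H :=
  List.count_filter (by simp [isD])

lemma count_eraseD_U (w : List Step) : (eraseD w).count Step.U = w.count Step.U :=
  List.count_filter (by simp [isD])

lemma count_eraseD_D (w : List Step) : (eraseD w).count Step.D = 0 := by
  rw [List.count_eq_zero]
  intro h
  have := List.of_mem_filter h
  simp [isD] at this

lemma mem_eraseD_of_mem_U {w : List Step} (h : Step.U ∈ w) : Step.U ∈ eraseD w :=
  List.mem_filter.2 ⟨h, by simp [isD]⟩

lemma mem_eraseD_of_mem_H {w : List Step} (h : Step.H ∈ w) : Step.H ∈ eraseD w :=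
  List.mem_filter.2 ⟨h, by simp [isD]⟩

lemma eraseD_replicate_H (k : ℕ) :
    eraseD (List.replicate k Step.H) = List.replicate k Step.H := by
  induction k with
  | zero => simp [eraseD]
  | succ k ih => rw [List.replicate_succ, eraseD_cons_H, ih]

-- ## skeleton lemmas

lemma blk_length (e : ℕ) : (blk e).length = e + 1 := by simp [blk]

lemma blk_count_H (e : ℕ) : (blk e).count Step.H = e := by
  simp [blk, List.count_append, List.count_replicate]

lemma blk_count_U (e : ℕ) : (blk e).count Step.U = 1 := by
  simp [blk, List.count_append, List.count_replicate]

lemma blk_count_D (e : ℕ) : (blk e).count Step.D = 0 := by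
  simp [blk, List.count_append, List.count_replicate]

lemma skel_length (e n : ℕ) : (skel e n).length = (e+1)*n := by
  induction n with
  | zero => simp [skel]
  | succ n ih => rw [skel, List.length_append, blk_length, ih]; ring

lemma skel_count_H (e n : ℕ) : (skel e n).count Step.H = e*n := by
  induction n with
  | zero => simp [skel]
  | succ n ih => rw [skel, List.count_append, blk_count_H, ih]; ring

lemma skel_count_U (e n : ℕ) : (skel e n).count Step.U = n := by
  induction n with
  | zero => simp [skel]
  | succ n ih => rw [skel, List.count_append, blk_count_U, ih]; ring

lemma skel_count_D (e n : ℕ) : (skel e n).count Step.D = 0 := by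
  induction n with
  | zero => simp [skel]
  | succ n ih => rw [skel, List.count_append, blk_count_D, ih]

lemma skel_noD (e n : ℕ) : Step.D ∉ skel e n := by
  intro h
  have := skel_count_D e n
  rw [List.count_eq_zero] at this
  exact this h

lemma skel_take_counts (e : ℕ) : ∀ n f, f ≤ (e+1)*n →
    ((skel e n).take f).count Step.U = f / (e+1) ∧
    ((skel e n).take f).count Step.H = f - f / (e+1) := by
  intro n
  induction n with
  | zero =>
    intro f hf
    simp at hf
    subst hf
    simp
  | succ n ih =>
    intro f hf
    rcases le_or_gt f e with hle | hgt
    · -- f ≤ e: take f of blk = replicate f H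
      have h1 : (skel e (n+1)).take f = List.replicate f Step.H := by
        rw [skel, List.take_append,
          show f - (blk e).length = 0 by rw [blk_length]; omega,
          List.take_zero, List.append_nil, blk, List.take_append,
          show f - (List.replicate e Step.H).length = 0 by simp; omega,
          List.take_zero, List.append_nil, List.take_replicate,
          show min f e = f by omega]
      have hdiv0 : f / (e+1) = 0 := Nat.div_eq_of_lt (by omega)
      rw [h1]
      constructor
      · simp [List.count_replicate, hdiv0]
      · simp [List.count_replicate, hdiv0]
    · rcases le_or_gt f (e+1) with hle2 | hgt2
      · -- f = e+1 : take f = blk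
        have hfe : f = e + 1 := by omega
        have h1 : (skel e (n+1)).take f = blk e := by
          rw [skel, List.take_append,
            show f - (blk e).length = 0 by rw [blk_length]; omega,
            List.take_zero, List.append_nil, List.take_of_length_le (by rw [blk_length]; omega)]
        rw [h1]
        constructor
        · rw [blk_count_U, hfe, Nat.div_self (by omega)]
        · rw [blk_count_H, hfe, Nat.div_self (by omega)]
          omega
      · -- f > e+1
        have h1 : (skel e (n+1)).take f = blk e ++ (skel e n).take (f - (e+1)) := by
          rw [skel, List.take_append, blk_length,
            List.take_of_length_le (by rw [blk_length]; omega)]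
        have hrec : f - (e+1) ≤ (e+1)*n := by
          have : (e+1)*(n+1) = (e+1)*n + (e+1) := by ring
          omega
        obtain ⟨ihU, ihH⟩ := ih (f - (e+1)) hrec
        rw [h1, List.count_append, List.count_append, blk_count_U, blk_count_H, ihU, ihH]
        have hdiv : f / (e+1) = (f - (e+1)) / (e+1) + 1 :=
          Nat.div_eq_sub_div (by omega) (by omega)
        have hd1 : (f - (e+1)) / (e+1) ≤ f - (e+1) := Nat.div_le_self _ _
        constructor
        · omega
        · omega

-- first-occurrence split

lemma exists_first_split {α : Type*} [DecidableEq α] {a : α} :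
    ∀ {l : List α}, a ∈ l → ∃ s t, l = s ++ a :: t ∧ a ∉ s := by
  intro l
  induction l with
  | nil => intro h; simp at h
  | cons x xs ih =>
    intro h
    rcases eq_or_ne x a with rfl | hne
    · exact ⟨[], xs, rfl, by simp⟩
    · have hmem : a ∈ xs := by
        rcases List.mem_cons.1 h with h' | h'
        · exact absurd h'.symm hne
        · exact h'
      obtain ⟨s, t, rfl, hs⟩ := ih hmem
      exact ⟨x :: s, t, rfl, by simp [hs, Ne.symm hne]⟩

lemma first_split_unique {α : Type*} {a : α} : ∀ {x x' y y' : List α},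
    x ++ a :: y = x' ++ a :: y' → a ∉ x → a ∉ x' → x = x' ∧ y = y' := by
  intro x
  induction x with
  | nil =>
    intro x' y y' h hx hx'
    cases x' with
    | nil => simp at h; exact ⟨rfl, h⟩
    | cons z zs =>
      simp only [List.nil_append, List.cons_append, List.cons.injEq] at h
      obtain ⟨rfl, -⟩ := h
      exact absurd (List.mem_cons_self) hx'
  | cons z zs ih =>
    intro x' y y' h hx hx'
    cases x' with
    | nil =>
      simp only [List.cons_append, List.nil_append, List.cons.injEq] at h
      exact absurd (List.mem_cons.2 (Or.inl h.1.symm)) hx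
    | cons z' zs' =>
      simp only [List.cons_append, List.cons.injEq] at h
      obtain ⟨rfl, h2⟩ := h
      have hx2 : a ∉ zs := fun hm => hx (List.mem_cons.2 (Or.inr hm))
      have hx2' : a ∉ zs' := fun hm => hx' (List.mem_cons.2 (Or.inr hm))
      obtain ⟨rfl, rfl⟩ := ih h2 hx2 hx2'
      exact ⟨rfl, rfl⟩

lemma U_not_mem_replicate_H (e : ℕ) : Step.U ∉ List.replicate e Step.H := by
  intro h
  have := List.eq_of_mem_replicate h
  exact Step.noConfusion this

lemma skel_cons_form (e n : ℕ) : skel e (n+1) = List.replicate e Step.H ++ Step.U :: skel e n := by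
  rw [skel, blk, List.append_assoc]
  rfl

lemma skel_gap (e : ℕ) : ∀ (n : ℕ) (P M S : List Step),
    skel e n = P ++ Step.U :: M ++ Step.U :: S → Step.U ∉ M → M.count Step.H = e := by
  intro n
  induction n with
  | zero =>
    intro P M S h _
    have := congrArg List.length h
    simp [skel] at this
  | succ n ih =>
    intro P M S h hM
    rw [skel_cons_form] at h
    by_cases hUP : Step.U ∈ P
    · obtain ⟨P1, P2, rfl, hP1⟩ := exists_first_split hUP
      rw [List.append_assoc, List.cons_append, List.append_assoc] at h
      have h' : List.replicate e Step.H ++ Step.U :: skel e n =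
          P1 ++ Step.U :: (P2 ++ (Step.U :: M ++ Step.U :: S)) := by
        rw [h]; simp [List.append_assoc]
      obtain ⟨-, h2⟩ := first_split_unique h' (U_not_mem_replicate_H e) hP1
      have h3 : skel e n = P2 ++ Step.U :: M ++ Step.U :: S := by
        rw [h2]; simp [List.append_assoc]
      exact ih P2 M S h3 hM
    · have h' : List.replicate e Step.H ++ Step.U :: skel e n =
          P ++ Step.U :: (M ++ Step.U :: S) := by rw [h]; simp [List.append_assoc]
      obtain ⟨-, h2⟩ := first_split_unique h' (U_not_mem_replicate_H e) hUP
      -- skel e n = M ++ U :: S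
      cases n with
      | zero =>
        have := congrArg List.length h2
        simp [skel] at this
      | succ n' =>
        rw [skel_cons_form] at h2
        have h3 : List.replicate e Step.H ++ Step.U :: skel e n' =
            M ++ Step.U :: S := by rw [← h2]
        obtain ⟨hM2, -⟩ := first_split_unique h3.symm hM (U_not_mem_replicate_H e)
        rw [hM2, List.count_replicate]
        simp

-- ## merge lemmas

lemma merge_length : ∀ (b : List Bool) (σ : List Step), b.count false ≤ σ.length →
    (merge b σ).length = b.length := by
  intro b
  induction b with
  | nil => intro σ _; simp [merge]
  | cons x bs ih =>
    intro σ hc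
    cases x
    · cases σ with
      | nil => simp [List.count_cons] at hc
      | cons y σ' =>
        rw [merge, List.length_cons, List.length_cons, ih σ' (by
          simp [List.count_cons] at hc; omega)]
    · rw [merge, List.length_cons, List.length_cons, ih σ (by
        simp [List.count_cons] at hc; omega)]

lemma eraseD_merge : ∀ (b : List Bool) (σ : List Step), b.count false ≤ σ.length →
    Step.D ∉ σ → eraseD (merge b σ) = σ.take (b.count false) := by
  intro b
  induction b with
  | nil => intro σ _ _; simp [merge, eraseD]
  | cons x bs ih =>
    intro σ hc hD
    cases x
    · cases σ with
      | nil => simp [List.count_cons] at hc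
      | cons y σ' =>
        have hy : y ≠ Step.D := fun h => hD (h ▸ List.mem_cons_self)
        have hcc : (false :: bs).count false = bs.count false + 1 := by
          simp [List.count_cons]
        rw [merge, hcc]
        have herase : eraseD (y :: merge bs σ') = y :: eraseD (merge bs σ') := by
          cases y <;> simp [eraseD, isD] at *
        rw [herase, ih σ' (by simp [List.count_cons] at hc; omega)
          (fun h => hD (List.mem_cons.2 (Or.inr h))), List.take_succ_cons]
    · have hcc : (true :: bs).count false = bs.count false := by
        simp [List.count_cons]
      rw [merge, eraseD_cons_D, hcc, ih σ (by simp [List.count_cons] at hc; omega) hD]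

lemma mask_merge : ∀ (b : List Bool) (σ : List Step), b.count false ≤ σ.length →
    Step.D ∉ σ → mask (merge b σ) = b := by
  intro b
  induction b with
  | nil => intro σ _ _; simp [merge, mask]
  | cons x bs ih =>
    intro σ hc hD
    cases x
    · cases σ with
      | nil => simp [List.count_cons] at hc
      | cons y σ' =>
        have hy : y ≠ Step.D := fun h => hD (h ▸ List.mem_cons_self)
        rw [merge, mask, List.map_cons]
        have hisD : isD y = false := by cases y <;> simp [isD] at *
        rw [hisD]
        congr 1
        exact ih σ' (by simp [List.count_cons] at hc; omega)
          (fun h => hD (List.mem_cons.2 (Or.inr h)))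
    · rw [merge, mask, List.map_cons]
      have hisD : isD Step.D = true := rfl
      rw [hisD]
      congr 1
      exact ih σ (by simp [List.count_cons] at hc; omega) hD

lemma merge_mask_eraseD : ∀ w : List Step, merge (mask w) (eraseD w) = w := by
  intro w
  induction w with
  | nil => simp [mask, eraseD, merge]
  | cons x w' ih =>
    cases x
    · rw [mask, List.map_cons, show isD Step.H = false from rfl, eraseD_cons_H, merge, ← mask, ih]
    · rw [mask, List.map_cons, show isD Step.U = false from rfl, eraseD_cons_U, merge, ← mask, ih]
    · rw [mask, List.map_cons, show isD Step.D = true from rfl, eraseD_cons_D, merge, ← mask, ih]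

lemma merge_take : ∀ (b : List Bool) (σ : List Step) (j : ℕ), b.count false ≤ σ.length →
    (merge b σ).take j = merge (b.take j) σ := by
  intro b
  induction b with
  | nil => intro σ j _; simp [merge]
  | cons x bs ih =>
    intro σ j hc
    cases j with
    | zero => simp [merge]
    | succ j =>
      cases x
      · cases σ with
        | nil => simp [List.count_cons] at hc
        | cons y σ' =>
          rw [merge, List.take_succ_cons, List.take_succ_cons, merge,
            ih σ' j (by simp [List.count_cons] at hc; omega)]
      · rw [merge, List.take_succ_cons, List.take_succ_cons, merge,
          ih σ j (by simp [List.count_cons] at hc; omega)]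

lemma merge_count_D (b : List Bool) (σ : List Step) (h1 : b.count false ≤ σ.length)
    (h2 : Step.D ∉ σ) : (merge b σ).count Step.D = b.count true := by
  have h3 := count_true_mask (merge b σ)
  rw [mask_merge b σ h1 h2] at h3
  omega

lemma merge_allfalse : ∀ (j : ℕ) (σ : List Step), j ≤ σ.length →
    merge (List.replicate j false) σ = σ.take j := by
  intro j
  induction j with
  | zero => intro σ _; simp [merge]
  | succ j ih =>
    intro σ hj
    cases σ with
    | nil => simp at hj
    | cons y σ' =>
      rw [List.replicate_succ, merge, List.take_succ_cons, ih σ' (by simp at hj; omega)]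

-- ## no-U-no-D words are replicate H

lemma noUD_replicate (v : List Step) (hU : v.count Step.U = 0) (hD : v.count Step.D = 0) :
    v = List.replicate (v.count Step.H) Step.H := by
  induction v with
  | nil => simp
  | cons x xs ih =>
    cases x
    · have h1 : xs.count Step.U = 0 := by simp [List.count_cons] at hU; omega
      have h2 : xs.count Step.D = 0 := by simp [List.count_cons] at hD; omega
      rw [show (Step.H :: xs).count Step.H = xs.count Step.H + 1 by simp [List.count_cons],
        List.replicate_succ]
      rw [← ih h1 h2]
    · simp [List.count_cons] at hU
    · simp [List.count_cons] at hD

-- ## structure after first U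

lemma struct_after_U (e : ℕ) : ∀ (k : ℕ) (v' : List Step),
    (∀ p mid s, Step.U :: v' = p ++ Step.U :: mid ++ Step.U :: s → Step.U ∉ mid →
      mid.count Step.H = e) →
    (Step.U :: v').count Step.U = k + 1 → (Step.U :: v').count Step.D = 0 →
    ∃ r, Step.U :: v' =
        (List.replicate k (Step.U :: List.replicate e Step.H)).flatten ++
          Step.U :: List.replicate r Step.H ∧
      (Step.U :: v').count Step.H = k * e + r := by
  intro k
  induction k with
  | zero =>
    intro v' _ hU hD
    have h1 : v'.count Step.U = 0 := by simp [List.count_cons] at hU; omega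
    have h2 : v'.count Step.D = 0 := by simp [List.count_cons] at hD; omega
    refine ⟨v'.count Step.H, ?_, ?_⟩
    · rw [List.replicate_zero, List.flatten_nil, List.nil_append]
      congr 1
      exact noUD_replicate v' h1 h2
    · simp [List.count_cons]
  | succ k ih =>
    intro v' hgap hU hD
    have h1 : v'.count Step.U = k + 1 := by simp [List.count_cons] at hU; omega
    have hUmem : Step.U ∈ v' := by
      rw [← List.count_pos_iff]
      omega
    obtain ⟨mid, s, rfl, hmid⟩ := exists_first_split hUmem
    have hmidU : mid.count Step.U = 0 := List.count_eq_zero.2 hmid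
    have hmidD : mid.count Step.D = 0 := by
      rw [List.count_cons, List.count_append, List.count_cons] at hD
      simp at hD
      omega
    have hmide : mid.count Step.H = e :=
      hgap [] mid s (by simp) hmid
    have hmidrep : mid = List.replicate e Step.H := by
      have h4 := noUD_replicate mid hmidU hmidD
      rw [hmide] at h4
      exact h4
    have hgap2 : ∀ p mid2 s2, Step.U :: s = p ++ Step.U :: mid2 ++ Step.U :: s2 →
        Step.U ∉ mid2 → mid2.count Step.H = e := by
      intro p mid2 s2 heq hm2
      apply hgap ((Step.U :: mid) ++ p) mid2 s2
      · rw [show Step.U :: (mid ++ Step.U :: s) = (Step.U :: mid) ++ (Step.U :: s) by simp, heq]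
        simp [List.append_assoc]
      · exact hm2
    have hU2 : (Step.U :: s).count Step.U = k + 1 := by
      rw [List.count_append, List.count_cons] at h1
      simp at h1
      simp [List.count_cons]
      omega
    have hD2 : (Step.U :: s).count Step.D = 0 := by
      rw [List.count_cons, List.count_append, List.count_cons] at hD
      simp at hD
      simp [List.count_cons]
      omega
    obtain ⟨r, hr1, hr2⟩ := ih s hgap2 hU2 hD2
    refine ⟨r, ?_, ?_⟩
    · rw [List.replicate_succ, List.flatten_cons]
      rw [show Step.U :: (mid ++ Step.U :: s) = (Step.U :: mid) ++ (Step.U :: s) by simp, hr1,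
        hmidrep]
      simp [List.append_assoc]
    · have hke : (k+1) * e = k * e + e := by ring
      simp only [List.count_cons, List.count_append] at hr2 ⊢
      simp at hr2 ⊢
      omega

-- ## lifting decompositions through eraseD

lemma eraseD_split : ∀ (w x y : List Step), eraseD w = x ++ y →
    ∃ w1 w2, w = w1 ++ w2 ∧ eraseD w1 = x ∧ eraseD w2 = y := by
  intro w
  induction w with
  | nil =>
    intro x y h
    simp [eraseD] at h
    exact ⟨[], [], by simp, by simp [eraseD, h.1], by simp [eraseD, h.2]⟩
  | cons z w' ih =>
    intro x y h
    cases hz : isD z with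
    | true =>
      have hzD : z = Step.D := by cases z <;> simp [isD] at hz ⊢
      subst hzD
      rw [eraseD_cons_D] at h
      obtain ⟨w1, w2, rfl, h1, h2⟩ := ih x y h
      exact ⟨Step.D :: w1, w2, by simp, by rw [eraseD_cons_D]; exact h1, h2⟩
    | false =>
      have herase : eraseD (z :: w') = z :: eraseD w' := by
        cases z <;> simp [isD] at hz ⊢ <;> simp [eraseD, isD]
      rw [herase] at h
      cases x with
      | nil =>
        exact ⟨[], z :: w', by simp, by simp [eraseD], by rw [herase]; simpa using h⟩
      | cons a x' =>
        simp only [List.cons_append, List.cons.injEq] at h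
        obtain ⟨rfl, h2⟩ := h
        obtain ⟨w1, w2, rfl, hh1, hh2⟩ := ih x' y h2
        exact ⟨z :: w1, w2, by simp, by
          have : eraseD (z :: w1) = z :: eraseD w1 := by
            cases z <;> simp [isD] at hz ⊢ <;> simp [eraseD, isD]
          rw [this, hh1], hh2⟩

lemma eraseD_cons_split : ∀ (w z : List Step), eraseD w = Step.U :: z →
    ∃ w1 w2, w = w1 ++ Step.U :: w2 ∧ eraseD w1 = [] ∧ eraseD w2 = z := by
  intro w
  induction w with
  | nil => intro z h; simp [eraseD] at h
  | cons a w' ih =>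
    intro z h
    cases a
    · rw [eraseD_cons_H] at h
      exact absurd (List.head_eq_of_cons_eq h) (by simp)
    · rw [eraseD_cons_U] at h
      have h2 := List.tail_eq_of_cons_eq h
      exact ⟨[], w', by simp, by simp [eraseD], h2⟩
    · rw [eraseD_cons_D] at h
      obtain ⟨w1, w2, rfl, h1, h2⟩ := ih z h
      exact ⟨Step.D :: w1, w2, by simp, by rw [eraseD_cons_D]; exact h1, h2⟩

lemma count_H_eraseD_nil {w : List Step} (h : eraseD w = []) : w.count Step.H = 0 := by
  rw [← count_eraseD_H, h]
  simp

-- ## gap and prefix conditions transfer to eraseD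

lemma gap_eraseD {t : ℕ} {w : List Step}
    (hgap : ∀ p mid s : List Step, w = p ++ Step.U :: mid ++ Step.U :: s →
      Step.U ∉ mid → mid.count Step.H = t - 2) :
    ∀ p mid s : List Step, eraseD w = p ++ Step.U :: mid ++ Step.U :: s →
      Step.U ∉ mid → mid.count Step.H = t - 2 := by
  intro p mid s heq hmid
  have heq2 : eraseD w = p ++ (Step.U :: (mid ++ Step.U :: s)) := by
    rw [heq]; simp
  obtain ⟨w1, w2, rfl, hw1, hw2⟩ := eraseD_split _ _ _ heq2
  obtain ⟨w2a, w2b, rfl, hw2a, hw2b⟩ := eraseD_cons_split _ _ hw2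
  obtain ⟨w3, w4, rfl, hw3, hw4⟩ := eraseD_split _ _ _ hw2b
  obtain ⟨w4a, w4b, rfl, hw4a, hw4b⟩ := eraseD_cons_split _ _ hw4
  have hU3 : Step.U ∉ w3 := by
    intro hU
    exact hmid (hw3 ▸ mem_eraseD_of_mem_U hU)
  have hU4a : Step.U ∉ w4a := by
    intro hU
    have := mem_eraseD_of_mem_U hU
    rw [hw4a] at this
    simp at this
  have hw : w1 ++ (w2a ++ Step.U :: (w3 ++ (w4a ++ Step.U :: w4b))) =
      (w1 ++ w2a) ++ Step.U :: (w3 ++ w4a) ++ Step.U :: w4b := by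
    simp [List.append_assoc]
  have hcount := hgap (w1 ++ w2a) (w3 ++ w4a) w4b hw (by
    intro hU
    rcases List.mem_append.1 hU with h | h
    · exact hU3 h
    · exact hU4a h)
  rw [List.count_append] at hcount
  have h0 : w4a.count Step.H = 0 := count_H_eraseD_nil hw4a
  rw [← hw3, count_eraseD_H]
  omega

-- ## the key structure lemma

lemma skel_of_parts (e : ℕ) : ∀ (k : ℕ),
    List.replicate e Step.H ++
      ((List.replicate k (Step.U :: List.replicate e Step.H)).flatten ++ [Step.U]) =
    skel e (k+1) := by
  intro k
  induction k with
  | zero => simp [skel, blk]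
  | succ k ih =>
    rw [show skel e (k+1+1) = blk e ++ skel e (k+1) from rfl, ← ih]
    rw [List.replicate_succ, List.flatten_cons, blk]
    simp [List.append_assoc]

lemma eraseD_eq_skel {e n : ℕ} {w : List Step} (h : GenSMotzkin (e+2) n w) :
    eraseD w = skel e n := by
  have hsub : (e+2) - 2 = e := by omega
  obtain ⟨h1, h2, h3, _h4, h5, h6, _h7⟩ := h
  rw [hsub] at h1 h5 h6
  have hu1 : (eraseD w).count Step.H = e * n := by rw [count_eraseD_H, h1]
  have hu2 : (eraseD w).count Step.U = n := by rw [count_eraseD_U, h2]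
  have hu3 : (eraseD w).count Step.D = 0 := count_eraseD_D w
  have hgap := gap_eraseD (t := e+2) (by rw [hsub]; exact h6)
  rw [hsub] at hgap
  cases n with
  | zero =>
    have hlen := length_step_counts (eraseD w)
    rw [hu1, hu2, hu3] at hlen
    simp at hlen
    rw [hlen]
    rfl
  | succ n' =>
    -- w nonempty
    have hwne : w ≠ [] := by
      intro hw
      rw [hw] at h2
      simp at h2
    have htake := h5 hwne
    -- u = replicate e H ++ v
    have hupref : (eraseD w).take e = List.replicate e Step.H := by
      have hsplit : w = w.take e ++ w.drop e := (List.take_append_drop e w).symm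
      have h8 : eraseD w = List.replicate e Step.H ++ eraseD (w.drop e) := by
        conv_lhs => rw [hsplit]
        rw [eraseD_append, htake, eraseD_replicate_H]
      rw [h8, List.take_append, List.take_of_length_le (by simp),
        show e - (List.replicate e Step.H).length = 0 by simp, List.take_zero,
        List.append_nil]
    have husplit : eraseD w = List.replicate e Step.H ++ (eraseD w).drop e :=
      by conv_lhs => rw [← List.take_append_drop e (eraseD w), hupref]
    set v := (eraseD w).drop e with hvdef
    have hvU : v.count Step.U = n' + 1 := by
      have := congrArg (List.count Step.U) husplit
      rw [hu2, List.count_append, List.count_replicate] at this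
      simp at this
      omega
    have hvD : v.count Step.D = 0 := by
      have := congrArg (List.count Step.D) husplit
      rw [hu3, List.count_append] at this
      omega
    have hvH : v.count Step.H = e * (n'+1) - e := by
      have := congrArg (List.count Step.H) husplit
      rw [hu1, List.count_append, List.count_replicate] at this
      simp at this
      omega
    -- v = mid ++ U :: s with U ∉ mid
    have hUv : Step.U ∈ v := by rw [← List.count_pos_iff]; omega
    obtain ⟨mid, s, hveq, hmidU⟩ := exists_first_split hUv
    have hmidUc : mid.count Step.U = 0 := List.count_eq_zero.2 hmidU
    have hmidD : mid.count Step.D = 0 := by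
      have := congrArg (List.count Step.D) hveq
      rw [hvD, List.count_append, List.count_cons] at this
      simp at this
      omega
    -- gap for U :: s
    have hgap2 : ∀ p mid2 s2, Step.U :: s = p ++ Step.U :: mid2 ++ Step.U :: s2 →
        Step.U ∉ mid2 → mid2.count Step.H = e := by
      intro p mid2 s2 heq hm2
      apply hgap (List.replicate e Step.H ++ mid ++ p) mid2 s2
      · rw [husplit, hveq, heq]
        simp [List.append_assoc]
      · exact hm2
    have hUs : (Step.U :: s).count Step.U = n' + 1 := by
      have := congrArg (List.count Step.U) hveq
      rw [hvU, List.count_append] at this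
      simp [List.count_cons] at this ⊢
      omega
    have hDs : (Step.U :: s).count Step.D = 0 := by
      have := congrArg (List.count Step.D) hveq
      rw [hvD, List.count_append] at this
      simp [List.count_cons] at this ⊢
      omega
    obtain ⟨r, hr1, hr2⟩ := struct_after_U e n' s hgap2 hUs hDs
    -- counting forces mid = [] and r = 0
    have hmidH : mid.count Step.H + r = 0 := by
      have := congrArg (List.count Step.H) hveq
      rw [hvH, List.count_append] at this
      have h9 : (Step.U :: s).count Step.H = n' * e + r := hr2
      have h10 : e * (n'+1) = e * n' + e := by ring
      have h11 : n' * e = e * n' := by ring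
      omega
    have hmidnil : mid = [] := by
      have := noUD_replicate mid hmidUc hmidD
      rw [show mid.count Step.H = 0 by omega] at this
      simpa using this
    have hr0 : r = 0 := by omega
    rw [husplit, hveq, hmidnil, hr1, hr0]
    rw [← skel_of_parts e n']
    simp

-- ## last-occurrence split

lemma exists_last_split {α : Type*} [DecidableEq α] {a : α} :
    ∀ {l : List α}, a ∈ l → ∃ s t, l = s ++ a :: t ∧ a ∉ t := by
  intro l
  induction l using List.reverseRecOn with
  | nil => intro h; simp at h
  | append_singleton xs x ih =>
    intro h
    rcases eq_or_ne x a with rfl | hne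
    · exact ⟨xs, [], rfl, by simp⟩
    · have hmem : a ∈ xs := by
        rcases List.mem_append.1 h with h' | h'
        · exact h'
        · simp at h'
          exact absurd h'.symm hne
      obtain ⟨s, t, rfl, hs⟩ := ih hmem
      refine ⟨s, t ++ [x], by simp, ?_⟩
      intro hmem2
      rcases List.mem_append.1 hmem2 with h' | h'
      · exact hs h'
      · simp at h'
        exact hne h'.symm

-- ## forward direction : GenSMotzkin gives a ballot mask

lemma bal_of_genS {e n : ℕ} {w : List Step} (h : GenSMotzkin (e+2) n w) :
    Bal (e+1) n (mask w) := by
  have hsub : (e+2)-2 = e := by omega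
  obtain ⟨h1, h2, h3, _h4, _h5, _h6, h7⟩ := h
  rw [hsub] at h1 h7
  refine ⟨?_, ?_, ?_⟩
  · rw [length_mask, length_step_counts w, h1, h2, h3]; ring
  · rw [count_true_mask, h3]
  · intro j
    rw [mask_take, count_true_mask, count_false_mask]
    rcases Nat.eq_zero_or_pos ((w.take j).count Step.D) with h0 | hpos
    · rw [h0]; simp
    · have hDmem : Step.D ∈ w.take j := by rw [← List.count_pos_iff]; omega
      obtain ⟨q, r, hpq, hr⟩ := exists_last_split hDmem
      have hw : w = q ++ Step.D :: (r ++ w.drop j) := by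
        conv_lhs => rw [← List.take_append_drop j w]
        rw [hpq]; simp
      obtain ⟨hc1, hc2⟩ := h7 q _ hw
      have hcount : (w.take j).count Step.D = q.count Step.D + 1 := by
        rw [hpq, List.count_append, List.count_cons]
        simp [List.count_eq_zero.2 hr]
      have hH : q.count Step.H ≤ (w.take j).count Step.H := by
        rw [hpq, List.count_append]; omega
      have hU : q.count Step.U ≤ (w.take j).count Step.U := by
        rw [hpq, List.count_append]; omega
      have key : (e+1) * (w.take j).count Step.D =
          (q.count Step.D + 1)*e + (q.count Step.D + 1) := by
        rw [hcount]; ring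
      linarith [hc1, hc2, hH, hU]

-- ## take-e of skeleton

lemma skel_take_e (e n : ℕ) (hn : 0 < n) :
    (skel e n).take e = List.replicate e Step.H := by
  cases n with
  | zero => omega
  | succ n' =>
    rw [skel_cons_form, List.take_append,
      show e - (List.replicate e Step.H).length = 0 by simp, List.take_zero,
      List.append_nil, List.take_replicate, show min e e = e by omega]

-- ## backward direction : ballot words give GenSMotzkin paths

lemma genS_of_bal {e n : ℕ} {b : List Bool} (hb : Bal (e+1) n b) :
    GenSMotzkin (e+2) n (merge b (skel e n)) := by
  have hsub : (e+2)-2 = e := by omega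
  obtain ⟨hb1, hb2, hb3⟩ := hb
  have hring : ((e+1)+1)*n = (e+1)*n + n := by ring
  have hbf : b.count false = (e+1)*n := by
    have := length_eq_counts b
    omega
  have hlen : b.count false ≤ (skel e n).length := by rw [skel_length]; omega
  have hfull : (skel e n).take (b.count false) = skel e n := by
    rw [hbf, ← skel_length]
    exact List.take_length
  have herase : eraseD (merge b (skel e n)) = skel e n := by
    rw [eraseD_merge b _ hlen (skel_noD e n), hfull]
  set w := merge b (skel e n) with hwdef
  have hmask : mask w = b := mask_merge b _ hlen (skel_noD e n)
  have hcH : w.count Step.H = e * n := by rw [← count_eraseD_H, herase, skel_count_H]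
  have hcU : w.count Step.U = n := by rw [← count_eraseD_U, herase, skel_count_U]
  have hcD : w.count Step.D = n := by
    rw [hwdef, merge_count_D b _ hlen (skel_noD e n), hb2]
  have hpre : ∀ j, (w.take j).count Step.D = (b.take j).count true ∧
      (w.take j).count Step.U = (b.take j).count false / (e+1) ∧
      (w.take j).count Step.H =
        (b.take j).count false - (b.take j).count false / (e+1) := by
    intro j
    have htj : w.take j = merge (b.take j) (skel e n) := merge_take b _ j hlen
    have hfle : (b.take j).count false ≤ b.count false := by
      conv_rhs => rw [← List.take_append_drop j b]
      rw [List.count_append]; omega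
    have hlen2 : (b.take j).count false ≤ (skel e n).length := le_trans hfle hlen
    have herase2 : eraseD (w.take j) = (skel e n).take ((b.take j).count false) := by
      rw [htj, eraseD_merge _ _ hlen2 (skel_noD e n)]
    obtain ⟨hsU, hsH⟩ := skel_take_counts e n ((b.take j).count false)
      (by rw [← skel_length e n]; exact hlen2)
    refine ⟨?_, ?_, ?_⟩
    · rw [htj, merge_count_D _ _ hlen2 (skel_noD e n)]
    · rw [← count_eraseD_U, herase2, hsU]
    · rw [← count_eraseD_H, herase2, hsH]
  refine ⟨?_, ?_, ?_, ?_, ?_, ?_, ?_⟩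
  · rw [hsub]; exact hcH
  · exact hcU
  · exact hcD
  · -- prefix D ≤ U
    intro p hp
    have hpt : p = w.take p.length := List.prefix_iff_eq_take.1 hp
    obtain ⟨hD, hU, -⟩ := hpre p.length
    rw [hpt, hD, hU]
    have hball := hb3 p.length
    rw [Nat.le_div_iff_mul_le (by omega : 0 < e + 1)]
    linarith [hball]
  · -- initial H-run
    intro hne
    rw [hsub]
    have hn : 0 < n := by
      rcases Nat.eq_zero_or_pos n with rfl | h
      · exfalso
        apply hne
        have hb0 : b = [] := List.length_eq_zero_iff.1 (by rw [hb1]; ring)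
        rw [hwdef, hb0]
        rfl
      · exact h
    have hblen : e ≤ b.length := by
      rw [hb1]
      have h9 : (e+1)+1 ≤ ((e+1)+1)*n := Nat.le_mul_of_pos_right _ hn
      omega
    have hbtake : b.take e = List.replicate e false := by
      have h0 : (b.take e).count true = 0 := by
        by_contra hpos
        have hmem : true ∈ b.take e := by
          rw [← List.count_pos_iff]; omega
        obtain ⟨x, y, hxy, _hx⟩ := exists_first_split hmem
        have hlentake : (b.take e).length = e := by
          rw [List.length_take]; omega
        have hxlen : x.length + 1 ≤ e := by
          have := congrArg List.length hxy
          rw [hlentake, List.length_append, List.length_cons] at this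
          omega
        have hbx : b.take (x.length + 1) = x ++ [true] := by
          have h9 : (b.take e).take (x.length+1) = x ++ [true] := by
            rw [hxy, List.take_append, List.take_of_length_le (by omega),
              show x.length + 1 - x.length = 1 by omega]
            rfl
          rw [← h9, List.take_take, show min (x.length+1) e = x.length+1 by omega]
        have hball := hb3 (x.length + 1)
        rw [hbx, List.count_append, List.count_append] at hball
        have hcf : x.count false ≤ x.length := List.count_le_length
        have h11 : ([true] : List Bool).count true = 1 := by rfl
        have h12 : ([true] : List Bool).count false = 0 := by rfl
        rw [h11, h12] at hball
        have h13 : (e+1) ≤ (e+1) * (x.count true + 1) :=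
          Nat.le_mul_of_pos_right _ (by omega)
        omega
      have hlenc := length_eq_counts (b.take e)
      rw [h0] at hlenc
      have hlentake : (b.take e).length = e := by
        rw [List.length_take]; omega
      have hall : ∀ x ∈ b.take e, false = x := List.count_eq_length.1 (by omega)
      have h14 := List.eq_replicate_of_mem (a := false) (l := b.take e)
        (fun x hx => (hall x hx).symm)
      rw [hlentake] at h14
      exact h14
    have hskl : e ≤ (skel e n).length := by
      rw [skel_length]
      have h9 : (e+1) ≤ (e+1)*n := Nat.le_mul_of_pos_right _ hn
      omega
    rw [hwdef, merge_take b _ e hlen, hbtake, merge_allfalse e _ hskl, skel_take_e e n hn]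
  · -- gap condition
    intro p mid s heq hmid
    rw [hsub]
    have herq := congrArg eraseD heq
    rw [herase, eraseD_append, eraseD_append, eraseD_cons_U, eraseD_cons_U] at herq
    have hg := skel_gap e n (eraseD p) (eraseD mid) (eraseD s) herq (by
      intro hU
      exact hmid (List.mem_filter.1 hU).1)
    rw [count_eraseD_H] at hg
    exact hg
  · -- D position condition
    intro p s heq
    have hj : w.take p.length = p := by
      rw [heq, List.take_append, Nat.sub_self, List.take_zero,
        List.append_nil, List.take_of_length_le le_rfl]
    have htake1 : w.take (p.length + 1) = p ++ [Step.D] := by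
      rw [heq, List.take_append, List.take_of_length_le (by omega),
        show p.length + 1 - p.length = 1 by omega]
      rfl
    have hbt : ∀ x, b.take x = mask (w.take x) := by
      intro x; rw [← hmask, mask_take]
    have hb1' : (b.take (p.length + 1)).count true = p.count Step.D + 1 := by
      rw [hbt, htake1, mask_append, List.count_append, count_true_mask]
      rfl
    have hbfj : (b.take (p.length + 1)).count false = (b.take p.length).count false := by
      rw [hbt, hbt, htake1, hj, mask_append, List.count_append]
      rfl
    have hball := hb3 (p.length + 1)
    rw [hb1', hbfj] at hball
    obtain ⟨hD, hU, hH⟩ := hpre p.length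
    rw [hj] at hD hU hH
    have hdiv1 : p.count Step.D + 1 ≤ (b.take p.length).count false / (e+1) := by
      rw [Nat.le_div_iff_mul_le (by omega : 0 < e + 1)]
      linarith [hball]
    constructor
    · rw [hsub, hH]
      set f := (b.take p.length).count false with hfdef
      set A := f / (e+1) with hAdef
      have h21 : A ≤ f := Nat.div_le_self _ _
      have h22 : A * (e+1) ≤ f := Nat.div_mul_le_self f (e+1)
      have h23 : (p.count Step.D + 1) * e ≤ A * e :=
        Nat.mul_le_mul_right _ hdiv1
      have h24 : A * (e+1) = A * e + A := by ring
      omega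
    · rw [hU]
      exact hdiv1

-- ## the equivalence

def genSEquivBal (e n : ℕ) : {w : List Step // GenSMotzkin (e+2) n w} ≃
    {b : List Bool // Bal (e+1) n b} where
  toFun w := ⟨mask w.1, bal_of_genS w.2⟩
  invFun b := ⟨merge b.1 (skel e n), genS_of_bal b.2⟩
  left_inv w := by
    apply Subtype.ext
    have h := eraseD_eq_skel w.2
    conv_rhs => rw [← merge_mask_eraseD w.1]
    rw [h]
  right_inv b := by
    apply Subtype.ext
    obtain ⟨b, hb⟩ := b
    have hring : ((e+1)+1)*n = (e+1)*n + n := by ring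
    have hbf : b.count false = (e+1)*n := by
      have := length_eq_counts b
      have := hb.1
      have := hb.2.1
      omega
    exact mask_merge b _ (by rw [skel_length]; omega) (skel_noD e n)

end SMotz

theorem gen_smotzkin_count (t n : ℕ) (ht : 2 ≤ t) :
    Nat.card {w : List Step // GenSMotzkin t n w} =
        (t * n).choose n / ((t - 1) * n + 1) ∧
      Nat.card {w : List Step // GenSMotzkin t n w} =
        Nat.card {T : TAry t // T.size = n} := by
  obtain ⟨e, rfl⟩ : ∃ e, t = e + 2 := ⟨t - 2, by omega⟩
  have hcard1 : Nat.card {w : List Step // GenSMotzkin (e+2) n w} =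
      Nat.card {a : List Bool // SMotz.Dom (e+1) n a} := by
    rw [Nat.card_congr (SMotz.genSEquivBal e n), Nat.card_congr (SMotz.balEquivDom (e+1) n)]
  have hdom := SMotz.card_dom (e+1) n
  rw [show e+1+1 = e+2 by omega] at hdom
  constructor
  · rw [hcard1, show (e+2) - 1 = e + 1 by omega]
    symm
    apply Nat.div_eq_of_eq_mul_left (by omega : 0 < (e+1)*n + 1)
    exact hdom.symm
  · rw [hcard1]
    exact (SMotz.card_trees (e+1) n).symm
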